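/- The product ⋆ is graded commutative: for all f ∈ F_p and g ∈ F_q, f ⋆ g = (−1)^{pq} g ⋆ f. -/

import Mathlib

open Classical MvPolynomial Finsupp TensorProduct

set_option maxHeartbeats 1600000

noncomputable section

namespace EdgeRes

/-- A "cell" `(σ, τ)`: a pair of finite sets of vertices, representing the symbol `[σ|τ]`. -/
abbrev Cell (n : ℕ) := Finset (Fin n) × Finset (Fin n)

/-- The cointerval graph of the intervals `[a i, b i]`: distinct vertices are adjacent
iff the corresponding closed intervals are disjoint. -/
def cigraph (n : ℕ) (a b : Fin n → ℝ) : SimpleGraph (Fin n) where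
  Adj i j := i ≠ j ∧ Disjoint (Set.Icc (a i) (b i)) (Set.Icc (a j) (b j))
  symm := by constructor; intro i j h; exact ⟨h.1.symm, h.2.symm⟩
  loopless := by constructor; intro i h; exact h.1 rfl

variable {n : ℕ}

/-- The homological degree of a cell: `|σ| + |τ| - 1`. -/
def cellDeg (e : Cell n) : ℕ := e.1.card + e.2.card - 1

/-- `e = (σ, τ)` is a basis cell: either the degree-0 cell `(∅, ∅)` (representing `1 ∈ B₀`),
or `σ, τ` are disjoint and nonempty, `max σ < min τ`, and every `i ∈ σ` is adjacent
to `min τ` in `G`. -/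
def IsBasisCell (G : SimpleGraph (Fin n)) (e : Cell n) : Prop :=
  e = (∅, ∅) ∨
  (e.1.Nonempty ∧ e.2.Nonempty ∧ Disjoint e.1 e.2 ∧
   (∀ i ∈ e.1, ∀ j ∈ e.2, i < j) ∧
   (∀ i ∈ e.1, ∀ j ∈ e.2, (∀ j' ∈ e.2, j ≤ j') → G.Adj i j))

/-- `e ∈ B_d`. -/
def InB (G : SimpleGraph (Fin n)) (d : ℕ) (e : Cell n) : Prop :=
  IsBasisCell G e ∧ cellDeg e = d

/-- The underlying module of the resolution: the free `S`-module on all cells (the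
resolution `F` is the submodule family spanned by the basis cells of each degree). -/
abbrev Ftot (n : ℕ) (k : Type) [Field k] := Cell n →₀ MvPolynomial (Fin n) k

variable (G : SimpleGraph (Fin n)) (k : Type) [Field k]

/-- The basis vector corresponding to a cell, where symbols that are not genuine
basis elements are interpreted as `0`. -/
def sym (e : Cell n) : Ftot n k :=
  if IsBasisCell G e then Finsupp.single e 1 else 0

/-- The differential on a basis cell: `d[{i}|{j}] = x_i x_j`, and for `|σ|+|τ| ≥ 3`,
`d[σ|τ] = Σ_{i∈σ} (−1)^{|τ|+|{j∈σ : j>i}|} x_i [σ∖i|τ] + Σ_{i∈τ} (−1)^{|{j∈τ : j>i}|} x_i [σ|τ∖i]`. -/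
def diffCell (e : Cell n) : Ftot n k :=
  if IsBasisCell G e then
    if e.1.card + e.2.card = 2 then
      (∏ i ∈ e.1 ∪ e.2, (X i : MvPolynomial (Fin n) k)) • sym G k ((∅, ∅) : Cell n)
    else if 3 ≤ e.1.card + e.2.card then
      (∑ i ∈ e.1,
        (((-1 : MvPolynomial (Fin n) k) ^ (e.2.card + (e.1.filter fun j => i < j).card)) * X i) •
          sym G k (e.1.erase i, e.2))
      + (∑ i ∈ e.2,
        (((-1 : MvPolynomial (Fin n) k) ^ ((e.2.filter fun j => i < j).card)) * X i) •
          sym G k (e.1, e.2.erase i))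
    else 0
  else 0

/-- The differential, as an `S`-linear endomorphism of the total module (it is zero in
degree `0` and on non-basis cells). -/
def Dmap : Ftot n k →ₗ[MvPolynomial (Fin n) k] Ftot n k :=
  Finsupp.lsum ℕ fun e => LinearMap.smulRight LinearMap.id (diffCell G k e)

/-- The submodule `F_d`: the span of the basis cells in `B_d`.  (`F` is the direct sum of
these, and `F_0 = S·[∅|∅] ≅ S`.) -/
def Fsub (d : ℕ) : Submodule (MvPolynomial (Fin n) k) (Ftot n k) :=
  Submodule.span _ {f : Ftot n k | ∃ e : Cell n, InB G d e ∧ f = Finsupp.single e 1}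

/-- The edge ideal `I_G`, generated by the `x_i x_j` for edges `ij` of `G`. -/
def edgeIdeal : Ideal (MvPolynomial (Fin n) k) :=
  Ideal.span {m | ∃ i j : Fin n, G.Adj i j ∧ m = X i * X j}

/-- The irrelevant maximal ideal `(x_1, …, x_n)`. -/
def irrIdeal (n : ℕ) (k : Type) [Field k] : Ideal (MvPolynomial (Fin n) k) :=
  Ideal.span (Set.range fun i : Fin n => (X i : MvPolynomial (Fin n) k))

/-- The set of pairs `(i, j)` with `i < j`, `ij ∈ E(G)`, and `x_i x_j ∣ x^α`; i.e. the
elements `[{i}|{j}]` of `B₁` whose monomial divides `x^α`. -/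
def DvdSet (α : Fin n →₀ ℕ) : Finset (Fin n × Fin n) :=
  Finset.univ.filter fun p => p.1 < p.2 ∧ G.Adj p.1 p.2 ∧ 1 ≤ α p.1 ∧ 1 ≤ α p.2

/-- `c` on a monomial `x^α ∈ F_0 = S`: zero if `x^α ∉ I_G`; otherwise
`(x^α/(x_i x_j))·[{i}|{j}]` for the `≺`-minimal `[{i}|{j}] ∈ B₁` with `x_i x_j ∣ x^α`
(i.e. `j` is largest possible and then `i` smallest possible). -/
def cZero (α : Fin n →₀ ℕ) : Ftot n k :=
  if h : (DvdSet G α).Nonempty then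
    let t := ((DvdSet G α).image Prod.snd).max' (h.image _)
    if h2 : ((((DvdSet G α).filter fun p => p.2 = t)).image Prod.fst).Nonempty then
      let s := ((((DvdSet G α).filter fun p => p.2 = t)).image Prod.fst).min' h2
      (monomial (α - Finsupp.single s 1 - Finsupp.single t 1) (1 : k)) • sym G k ({s}, {t})
    else 0
  else 0

/-- `C₁ = {i ∈ supp α : i > max τ}`. -/
def C1set (τ : Finset (Fin n)) (α : Fin n →₀ ℕ) : Finset (Fin n) :=
  α.support.filter fun i => ∀ j ∈ τ, j < i

/-- `C₂ = {i ∈ supp α : i < min σ, {i, min τ} ∈ E(G)}`. -/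
def C2set (σ τ : Finset (Fin n)) (α : Fin n →₀ ℕ) : Finset (Fin n) :=
  α.support.filter fun i =>
    (∀ s ∈ σ, i < s) ∧ ∀ j ∈ τ, (∀ j' ∈ τ, j ≤ j') → G.Adj i j

/-- `C₃ = {i ∈ supp α : i < min σ, i < max supp α, {i, max supp α} ∈ E(G)}`. -/
def C3set (σ : Finset (Fin n)) (α : Fin n →₀ ℕ) : Finset (Fin n) :=
  α.support.filter fun i =>
    (∀ s ∈ σ, i < s) ∧ ∀ m ∈ α.support, (∀ m' ∈ α.support, m' ≤ m) → (i < m ∧ G.Adj i m)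

/-- The value of the contracting homotopy `c` on the `k`-basis vector `x^α·e`. -/
def cMono (e : Cell n) (α : Fin n →₀ ℕ) : Ftot n k :=
  if IsBasisCell G e then
    if hτ : e.2.Nonempty then
      if e.2.card = 1 then
        -- `τ = {t}`
        let t := e.2.max' hτ
        if h1 : (C1set e.2 α).Nonempty then
          let m1 := (C1set e.2 α).max' h1
          (monomial (α - Finsupp.single m1 1) (1 : k)) • sym G k (e.1, insert m1 e.2)
          + (if h3 : (C3set G e.1 α).Nonempty then
              let m3 := (C3set G e.1 α).min' h3
              ((-1 : MvPolynomial (Fin n) k) ^ (e.1.card + 1)) •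
                ((monomial (α + Finsupp.single t 1 - Finsupp.single m1 1 - Finsupp.single m3 1)
                    (1 : k)) • sym G k (insert m3 e.1, ({m1} : Finset (Fin n))))
            else 0)
        else
          if h2 : (C2set G e.1 e.2 α).Nonempty then
            let m2 := (C2set G e.1 e.2 α).min' h2
            ((-1 : MvPolynomial (Fin n) k) ^ (e.1.card + 1)) •
              ((monomial (α - Finsupp.single m2 1) (1 : k)) • sym G k (insert m2 e.1, e.2))
          else 0
      else
        -- `|τ| ≥ 2`
        if h1 : (C1set e.2 α).Nonempty then
          let m1 := (C1set e.2 α).max' h1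
          (monomial (α - Finsupp.single m1 1) (1 : k)) • sym G k (e.1, insert m1 e.2)
        else 0
    else cZero G k α  -- the degree-0 basis cell `(∅, ∅)`
  else 0

/-- The `k`-basis of the total module, indexed by pairs (cell, monomial exponent). -/
def FBasis (n : ℕ) (k : Type) [Field k] :
    Module.Basis ((_ : Cell n) × (Fin n →₀ ℕ)) k (Ftot n k) :=
  Finsupp.basis fun _ => MvPolynomial.basisMonomials (Fin n) k

/-- The contracting homotopy `c`, as a `k`-linear endomorphism of the total module. -/
def Cmap : Ftot n k →ₗ[k] Ftot n k :=
  (FBasis n k).constr ℕ fun p => cMono G k p.1 p.2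

/-- The `S`-bilinear extension of a map defined on pairs of cells. -/
def biext (b : Cell n → Cell n → Ftot n k) (f g : Ftot n k) : Ftot n k :=
  ∑ e₁ ∈ f.support, ∑ e₂ ∈ g.support, (f e₁ * g e₂) • b e₁ e₂

/-- The product of two basis cells, defined recursively (with fuel, which suffices as each
recursive step lowers the total degree): `1 ⋆ 1 = 1`, and for `p + q ≥ 1`,
`e₁ ⋆ e₂ = c((d e₁) ⋆ e₂) + (−1)^p c(e₁ ⋆ (d e₂))`. -/
def bstar : ℕ → Cell n → Cell n → Ftot n k
  | 0, _, _ => 0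
  | N + 1, e₁, e₂ =>
    if cellDeg e₁ + cellDeg e₂ = 0 then Finsupp.single ((∅, ∅) : Cell n) 1
    else
      Cmap G k (biext k (fun a b => bstar N a b) (Dmap G k (Finsupp.single e₁ 1)) (Finsupp.single e₂ 1))
      + ((-1 : MvPolynomial (Fin n) k) ^ cellDeg e₁) •
          Cmap G k (biext k (fun a b => bstar N a b) (Finsupp.single e₁ 1) (Dmap G k (Finsupp.single e₂ 1)))

/-- The product `⋆` on the resolution, extended `S`-bilinearly from basis cells. -/
def pstar (f g : Ftot n k) : Ftot n k := biext k (bstar G k (4 * n + 4)) f g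

/-- The map `∂` on a basis cell: `∂[{i}|{j}] = x_i x_j`, and for `|σ|+|τ| ≥ 3`,
`∂[σ|τ] = x_{max τ}[σ|τ∖max τ] − (−1)^{|τ|+|σ|} x_{min σ}[σ∖min σ|τ]`. -/
def partialCell (e : Cell n) : Ftot n k :=
  if IsBasisCell G e then
    if e.1.card + e.2.card = 2 then
      (∏ i ∈ e.1 ∪ e.2, (X i : MvPolynomial (Fin n) k)) • sym G k ((∅, ∅) : Cell n)
    else if 3 ≤ e.1.card + e.2.card then
      if h1 : e.1.Nonempty then
        if h2 : e.2.Nonempty then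
          (X (e.2.max' h2) : MvPolynomial (Fin n) k) • sym G k (e.1, e.2.erase (e.2.max' h2))
          - ((-1 : MvPolynomial (Fin n) k) ^ (e.2.card + e.1.card)) •
              ((X (e.1.min' h1) : MvPolynomial (Fin n) k) •
                sym G k (e.1.erase (e.1.min' h1), e.2))
        else 0
      else 0
    else 0
  else 0

/-- The map `∂`, as an `S`-linear endomorphism of the total module. -/
def Pmap : Ftot n k →ₗ[MvPolynomial (Fin n) k] Ftot n k :=
  Finsupp.lsum ℕ fun e => LinearMap.smulRight LinearMap.id (partialCell G k e)

/-- The `k`-linear projection `π` of `S` fixing each monomial not in `I_G` and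
annihilating each monomial in `I_G`. -/
def piMap : MvPolynomial (Fin n) k →ₗ[k] MvPolynomial (Fin n) k :=
  (MvPolynomial.basisMonomials (Fin n) k).constr ℕ fun α =>
    if monomial α (1 : k) ∈ edgeIdeal G k then 0 else monomial α (1 : k)

/-- The `ℕⁿ`-multidegree of the basis vector `x^α [σ|τ]`: `α + Σ_{i ∈ σ∪τ} eᵢ`. -/
def mdeg (e : Cell n) (α : Fin n →₀ ℕ) : Fin n →₀ ℕ :=
  α + ∑ i ∈ e.1 ∪ e.2, Finsupp.single i 1

/-- The `μ`-homogeneous component of the resolution (as a `k`-subspace). -/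
def Hsub (μ : Fin n →₀ ℕ) : Submodule k (Ftot n k) :=
  Submodule.span k {f : Ftot n k |
    ∃ (e : Cell n) (α : Fin n →₀ ℕ), IsBasisCell G e ∧ mdeg e α = μ ∧
      f = Finsupp.single e (monomial α (1 : k))}

/-! ### Auxiliary lemmas for graded commutativity -/

lemma sym_support (e : Cell n) : (sym G k e).support ⊆ {e} := by
  unfold sym
  split_ifs
  · exact Finsupp.support_single_subset
  · simp

lemma diff_support (e : Cell n) :
    ∀ a ∈ (diffCell G k e).support, cellDeg a + 1 = cellDeg e := by
  intro a ha
  unfold diffCell at ha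
  by_cases hb : IsBasisCell G e
  · rw [if_pos hb] at ha
    by_cases h2 : e.1.card + e.2.card = 2
    · rw [if_pos h2] at ha
      have h1 : a ∈ (sym G k ((∅, ∅) : Cell n)).support := Finsupp.support_smul ha
      have h2' : a = ((∅, ∅) : Cell n) := Finset.mem_singleton.mp (sym_support G k _ h1)
      subst h2'
      unfold cellDeg
      simp only [Finset.card_empty]
      omega
    · rw [if_neg h2] at ha
      by_cases h3 : 3 ≤ e.1.card + e.2.card
      · rw [if_pos h3] at ha
        rcases Finset.mem_union.mp (Finsupp.support_add ha) with h | h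
        · obtain ⟨i, hi, hai⟩ := Finset.mem_biUnion.mp (Finsupp.support_finset_sum h)
          have h1 : a ∈ (sym G k (e.1.erase i, e.2)).support := Finsupp.support_smul hai
          have h2' : a = (e.1.erase i, e.2) := Finset.mem_singleton.mp (sym_support G k _ h1)
          subst h2'
          have hc : (e.1.erase i).card = e.1.card - 1 := Finset.card_erase_of_mem hi
          have hc1 : 1 ≤ e.1.card := Finset.card_pos.mpr ⟨i, hi⟩
          unfold cellDeg
          simp only [hc]
          omega
        · obtain ⟨i, hi, hai⟩ := Finset.mem_biUnion.mp (Finsupp.support_finset_sum h)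
          have h1 : a ∈ (sym G k (e.1, e.2.erase i)).support := Finsupp.support_smul hai
          have h2' : a = (e.1, e.2.erase i) := Finset.mem_singleton.mp (sym_support G k _ h1)
          subst h2'
          have hc : (e.2.erase i).card = e.2.card - 1 := Finset.card_erase_of_mem hi
          have hc1 : 1 ≤ e.2.card := Finset.card_pos.mpr ⟨i, hi⟩
          unfold cellDeg
          simp only [hc]
          omega
      · rw [if_neg h3] at ha
        simp at ha
  · rw [if_neg hb] at ha
    simp at ha

lemma Dmap_single (e : Cell n) :
    Dmap G k (Finsupp.single e 1) = diffCell G k e := by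
  unfold Dmap
  rw [Finsupp.lsum_single]
  simp

lemma mvSign (m : ℕ) (x : Ftot n k) :
    ((-1 : MvPolynomial (Fin n) k) ^ m) • x = ((-1 : k) ^ m) • x := by
  have h : ((-1 : MvPolynomial (Fin n) k) ^ m) = C ((-1 : k) ^ m) := by
    rw [map_pow, map_neg, map_one]
  rw [h]
  ext e
  simp only [Finsupp.smul_apply]
  rw [smul_eq_mul, MvPolynomial.smul_eq_C_mul]

lemma Cmap_sign (m : ℕ) (x : Ftot n k) :
    Cmap G k (((-1 : MvPolynomial (Fin n) k) ^ m) • x)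
      = ((-1 : MvPolynomial (Fin n) k) ^ m) • Cmap G k x := by
  rw [mvSign, map_smul, ← mvSign]

lemma neg_one_pow_two_mul (m : ℕ) :
    ((-1 : MvPolynomial (Fin n) k) ^ (2 * m)) = 1 := by
  rw [pow_mul]
  norm_num

lemma biext_swap_right {N : ℕ}
    (IH : ∀ a b : Cell n, bstar G k N a b
      = ((-1 : MvPolynomial (Fin n) k) ^ (cellDeg a * cellDeg b)) • bstar G k N b a)
    (f : Ftot n k) (e : Cell n) (s : MvPolynomial (Fin n) k)
    (hf : ∀ a ∈ f.support, ((-1 : MvPolynomial (Fin n) k) ^ (cellDeg a * cellDeg e)) = s) :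
    biext k (fun a b => bstar G k N a b) f (Finsupp.single e 1)
      = s • biext k (fun a b => bstar G k N a b) (Finsupp.single e 1) f := by
  unfold biext
  rw [Finsupp.support_single_ne_zero _ one_ne_zero]
  simp only [Finset.sum_singleton, Finsupp.single_eq_same, mul_one, one_mul]
  rw [Finset.smul_sum]
  refine Finset.sum_congr rfl ?_
  intro a ha
  rw [IH a e, hf a ha, smul_smul, smul_smul, mul_comm]

lemma biext_swap_left {N : ℕ}
    (IH : ∀ a b : Cell n, bstar G k N a b
      = ((-1 : MvPolynomial (Fin n) k) ^ (cellDeg a * cellDeg b)) • bstar G k N b a)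
    (e : Cell n) (g : Ftot n k) (s : MvPolynomial (Fin n) k)
    (hg : ∀ b ∈ g.support, ((-1 : MvPolynomial (Fin n) k) ^ (cellDeg e * cellDeg b)) = s) :
    biext k (fun a b => bstar G k N a b) (Finsupp.single e 1) g
      = s • biext k (fun a b => bstar G k N a b) g (Finsupp.single e 1) := by
  unfold biext
  rw [Finsupp.support_single_ne_zero _ one_ne_zero]
  simp only [Finset.sum_singleton, Finsupp.single_eq_same, mul_one, one_mul]
  rw [Finset.smul_sum]
  refine Finset.sum_congr rfl ?_
  intro b hb
  rw [IH e b, hg b hb, smul_smul, smul_smul, mul_comm]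

lemma bstar_comm (N : ℕ) : ∀ e₁ e₂ : Cell n,
    bstar G k N e₁ e₂
      = ((-1 : MvPolynomial (Fin n) k) ^ (cellDeg e₁ * cellDeg e₂)) • bstar G k N e₂ e₁ := by
  induction N with
  | zero => intro e₁ e₂; simp [bstar]
  | succ N IH =>
    intro e₁ e₂
    by_cases h0 : cellDeg e₁ + cellDeg e₂ = 0
    · have hp : cellDeg e₁ = 0 := by omega
      simp only [bstar]
      rw [if_pos h0, if_pos (show cellDeg e₂ + cellDeg e₁ = 0 by omega),
        show cellDeg e₁ * cellDeg e₂ = 0 by rw [hp]; ring, pow_zero, one_smul]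
    · simp only [bstar, if_neg h0, if_neg (show ¬ cellDeg e₂ + cellDeg e₁ = 0 by omega)]
      rw [Dmap_single, Dmap_single]
      set p := cellDeg e₁ with hpdef
      set q := cellDeg e₂ with hqdef
      have hA := biext_swap_right G k IH (diffCell G k e₁) e₂
        ((-1 : MvPolynomial (Fin n) k) ^ ((p + 1) * q))
        (by
          intro a ha
          have h := diff_support G k e₁ a ha
          have he : (p + 1) * q = cellDeg a * q + 2 * q := by
            have : p = cellDeg a + 1 := h.symm
            rw [this]; ring
          rw [he, pow_add, neg_one_pow_two_mul, mul_one])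
      have hB := biext_swap_left G k IH e₁ (diffCell G k e₂)
        ((-1 : MvPolynomial (Fin n) k) ^ (p * (q + 1)))
        (by
          intro b hb
          have h := diff_support G k e₂ b hb
          have he : p * (q + 1) = p * cellDeg b + 2 * p := by
            have : q = cellDeg b + 1 := h.symm
            rw [this]; ring
          rw [he, pow_add, neg_one_pow_two_mul, mul_one])
      rw [hA, hB, Cmap_sign, Cmap_sign]
      rw [smul_smul, smul_add, smul_smul, ← pow_add, ← pow_add]
      have h1 : ((-1 : MvPolynomial (Fin n) k) ^ ((p + 1) * q))
          = ((-1 : MvPolynomial (Fin n) k) ^ (p * q + q)) := by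
        congr 1; ring
      have h2 : ((-1 : MvPolynomial (Fin n) k) ^ (p + p * (q + 1)))
          = ((-1 : MvPolynomial (Fin n) k) ^ (p * q)) := by
        rw [show p + p * (q + 1) = p * q + 2 * p by ring, pow_add, neg_one_pow_two_mul, mul_one]
      rw [h1, h2, add_comm]

lemma fsub_support {d : ℕ} {f : Ftot n k} (hf : f ∈ Fsub G k d) :
    ∀ a ∈ f.support, cellDeg a = d := by
  refine Submodule.span_induction ?_ ?_ ?_ ?_ hf
  · rintro x ⟨e, he, rfl⟩ a ha
    have : a = e := Finset.mem_singleton.mp (Finsupp.support_single_subset ha)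
    subst this
    exact he.2
  · intro a ha; simp at ha
  · intro x y _ _ hx hy a ha
    rcases Finset.mem_union.mp (Finsupp.support_add ha) with h | h
    · exact hx a h
    · exact hy a h
  · intro c x _ hx a ha
    exact hx a (Finsupp.support_smul ha)

theorem stmt8 (n : ℕ) (hn : 1 ≤ n) (a b : Fin n → ℝ)
    (hab : ∀ i, a i ≤ b i) (hmono : ∀ i j : Fin n, i < j → a i ≤ a j)
    (k : Type) [Field k]
    (p q : ℕ) (f g : Ftot n k)
    (hf : f ∈ Fsub (cigraph n a b) k p) (hg : g ∈ Fsub (cigraph n a b) k q) :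
    pstar (cigraph n a b) k f g = ((-1 : MvPolynomial (Fin n) k) ^ (p * q)) • pstar (cigraph n a b) k g f := by
  have hfd := fsub_support (cigraph n a b) k hf
  have hgd := fsub_support (cigraph n a b) k hg
  unfold pstar biext
  rw [Finset.sum_comm (s := g.support) (t := f.support)]
  rw [Finset.smul_sum]
  refine Finset.sum_congr rfl ?_
  intro u hu
  rw [Finset.smul_sum]
  refine Finset.sum_congr rfl ?_
  intro v hv
  rw [bstar_comm (cigraph n a b) k (4 * n + 4) u v, hfd u hu, hgd v hv,
    smul_smul, smul_smul, mul_comm (f u) (g v), mul_comm]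

end EdgeRes
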